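/- Let $r_0, r_1 \in (0,1)$ and consider the iterated function system $y_0(x) = r_0 x + c_0$, $y_1(x) = r_1 x + c_1$ on $\mathbb{R}$ satisfying the open set condition. Then the attractor (self-similar set) of $\{y_0, y_1\}$ has Hausdorff dimension $\lambda > 0$, where $\lambda$ is the unique solution of $r_0^\lambda + r_1^\lambda = 1$. -/

import Mathlib

open MeasureTheory Set List Filter
open scoped NNReal ENNReal

namespace Stmt15

variable (ρ cc : Bool → ℝ)

/-- single map -/
def ap (b : Bool) (x : ℝ) : ℝ := ρ b * x + cc b

/-- composite map along a word (leftmost letter applied last/outermost) -/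
def fw : List Bool → ℝ → ℝ
  | [], x => x
  | b :: w, x => ap ρ cc b (fw w x)

/-- contraction ratio of a word -/
def rl (w : List Bool) : ℝ := (w.map ρ).prod

@[simp] lemma rl_nil : rl ρ [] = 1 := rfl

@[simp] lemma rl_cons (b : Bool) (w : List Bool) : rl ρ (b :: w) = ρ b * rl ρ w := by
  simp [rl]

@[simp] lemma rl_append (u v : List Bool) : rl ρ (u ++ v) = rl ρ u * rl ρ v := by
  simp [rl]

@[simp] lemma fw_nil (x : ℝ) : fw ρ cc [] x = x := rfl

@[simp] lemma fw_cons (b : Bool) (w : List Bool) (x : ℝ) :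
    fw ρ cc (b :: w) x = ap ρ cc b (fw ρ cc w x) := rfl

lemma fw_append (u v : List Bool) (x : ℝ) :
    fw ρ cc (u ++ v) x = fw ρ cc u (fw ρ cc v x) := by
  induction u with
  | nil => rfl
  | cons b u ih => simp [ih]

variable {ρ}

lemma rl_pos (hρ : ∀ b, 0 < ρ b) (w : List Bool) : 0 < rl ρ w := by
  apply List.prod_pos
  intro a ha
  rcases List.mem_map.1 ha with ⟨b, _, rfl⟩
  exact hρ b

lemma rl_le_one (hρ : ∀ b, 0 < ρ b) (hρ1 : ∀ b, ρ b < 1) (w : List Bool) : rl ρ w ≤ 1 := by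
  induction w with
  | nil => simp
  | cons b w ih =>
    have h1 := rl_pos hρ w
    have := (hρ b).le
    have := (hρ1 b).le
    calc rl ρ (b :: w) = ρ b * rl ρ w := by simp
    _ ≤ 1 * 1 := by nlinarith
    _ = 1 := one_mul 1

lemma rl_le_pow (hρ : ∀ b, 0 < ρ b) (w : List Bool) (m : ℝ) (hm : ∀ b, ρ b ≤ m) :
    rl ρ w ≤ m ^ w.length := by
  induction w with
  | nil => simp
  | cons b w ih =>
    have h1 := rl_pos hρ w
    have h2 : (0:ℝ) < m := lt_of_lt_of_le (hρ false) (hm false)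
    calc rl ρ (b :: w) = ρ b * rl ρ w := by simp
    _ ≤ m * m ^ w.length := by
        apply mul_le_mul (hm b) ih h1.le h2.le
    _ = m ^ (b :: w).length := by rw [List.length_cons]; ring

lemma rl_prefix_le (hρ : ∀ b, 0 < ρ b) (hρ1 : ∀ b, ρ b < 1) {u v : List Bool}
    (h : u <+: v) : rl ρ v ≤ rl ρ u := by
  obtain ⟨t, rfl⟩ := h
  have h1 := rl_pos hρ u
  have h2 := rl_le_one hρ hρ1 t
  have h3 := rl_pos hρ t
  calc rl ρ (u ++ t) = rl ρ u * rl ρ t := by simp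
  _ ≤ rl ρ u * 1 := by nlinarith
  _ = rl ρ u := mul_one _

variable {cc}

lemma fw_sub (w : List Bool) (x y : ℝ) :
    fw ρ cc w x - fw ρ cc w y = rl ρ w * (x - y) := by
  induction w with
  | nil => simp
  | cons b w ih => simp [ap, mul_assoc, ← ih]; ring

lemma dist_fw (hρ : ∀ b, 0 < ρ b) (w : List Bool) (x y : ℝ) :
    dist (fw ρ cc w x) (fw ρ cc w y) = rl ρ w * dist x y := by
  rw [Real.dist_eq, Real.dist_eq, fw_sub, abs_mul, abs_of_pos (rl_pos hρ w)]

lemma fw_injective (hρ : ∀ b, 0 < ρ b) (w : List Bool) :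
    Function.Injective (fw ρ cc w) := by
  intro x y h
  have h1 := fw_sub (ρ := ρ) (cc := cc) w x y
  rw [h, sub_self] at h1
  have h2 := rl_pos hρ w
  rcases mul_eq_zero.1 h1.symm with h3 | h3
  · exact absurd h3 h2.ne'
  · linarith

lemma fw_surjective (hρ : ∀ b, 0 < ρ b) (w : List Bool) :
    Function.Surjective (fw ρ cc w) := by
  induction w with
  | nil => exact fun y => ⟨y, rfl⟩
  | cons b w ih =>
    intro y
    obtain ⟨z, hz⟩ := ih ((y - cc b) / ρ b)
    refine ⟨z, ?_⟩
    rw [fw_cons, hz]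
    simp only [ap]
    have := (hρ b).ne'
    field_simp
    ring

lemma fw_image_ball (hρ : ∀ b, 0 < ρ b) (w : List Bool) (x : ℝ) (ε : ℝ) :
    fw ρ cc w '' Metric.ball x ε = Metric.ball (fw ρ cc w x) (rl ρ w * ε) := by
  ext y
  constructor
  · rintro ⟨z, hz, rfl⟩
    rw [Metric.mem_ball] at hz ⊢
    rw [dist_fw hρ]
    exact (mul_lt_mul_iff_right₀ (rl_pos hρ w)).2 hz
  · intro hy
    obtain ⟨z, rfl⟩ := fw_surjective (cc := cc) hρ w y
    rw [Metric.mem_ball, dist_fw hρ] at hy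
    exact ⟨z, Metric.mem_ball.2 <| (mul_lt_mul_iff_right₀ (rl_pos hρ w)).1 hy, rfl⟩

section Invariance

variable {K : Set ℝ} (hinv : ∀ b, ap ρ cc b '' K ⊆ K)

include hinv in
lemma fw_image_subset (w : List Bool) : fw ρ cc w '' K ⊆ K := by
  induction w with
  | nil => rintro y ⟨x, hx, rfl⟩; exact hx
  | cons b w ih =>
    intro y hy
    rcases hy with ⟨x, hx, rfl⟩
    exact hinv b ⟨fw ρ cc w x, ih ⟨x, hx, rfl⟩, rfl⟩

lemma K_subset_cover (hcov : K ⊆ ap ρ cc false '' K ∪ ap ρ cc true '' K) (n : ℕ) :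
    K ⊆ ⋃ u : Fin n → Bool, fw ρ cc (List.ofFn u) '' K := by
  induction n with
  | zero => intro x hx; exact mem_iUnion.2 ⟨(fun i => false), ⟨x, hx, rfl⟩⟩
  | succ n ih =>
    intro x hx
    have : ∃ b y, y ∈ K ∧ ap ρ cc b y = x := by
      rcases hcov hx with ⟨y, hy, h⟩ | ⟨y, hy, h⟩
      exacts [⟨false, y, hy, h⟩, ⟨true, y, hy, h⟩]
    obtain ⟨b, y, hy, rfl⟩ := this
    rcases mem_iUnion.1 (ih hy) with ⟨u, z, hz, hzu⟩
    refine mem_iUnion.2 ⟨Fin.cons b u, z, hz, ?_⟩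
    rw [List.ofFn_succ]
    simp only [Fin.cons_zero, Fin.cons_succ, fw_cons]
    rw [hzu]

end Invariance

/-! ### cut sets -/

variable (ρ) in
def cut (d : ℝ) : Set (List Bool) :=
  {w | ∃ w' b, w = w' ++ [b] ∧ rl ρ w ≤ d ∧ d < rl ρ w'}

lemma cut_exists_prefix (hρ : ∀ b, 0 < ρ b) {d : ℝ} (hd1 : d < 1)
    (u : List Bool) (hu : rl ρ u ≤ d) : ∃ w ∈ cut ρ d, w <+: u := by
  induction u using List.reverseRecOn with
  | nil => simp at hu; linarith
  | append_singleton u b ih =>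
    by_cases h : rl ρ u ≤ d
    · obtain ⟨w, hw, hpre⟩ := ih h
      exact ⟨w, hw, hpre.trans (List.prefix_append _ _)⟩
    · exact ⟨u ++ [b], ⟨u, b, rfl, hu, not_le.1 h⟩, List.prefix_refl _⟩

lemma cut_not_prefix (hρ : ∀ b, 0 < ρ b) (hρ1 : ∀ b, ρ b < 1) {d : ℝ} {w₁ w₂ : List Bool}
    (h1 : w₁ ∈ cut ρ d) (h2 : w₂ ∈ cut ρ d) (hne : w₁ ≠ w₂) : ¬ w₁ <+: w₂ := by
  rintro hpre
  obtain ⟨w₁', b₁, rfl, hle1, hgt1⟩ := h1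
  obtain ⟨w₂', b₂, rfl, hle2, hgt2⟩ := h2
  -- w₁ is a prefix of w₂' since it is a proper prefix of w₂
  have hlen : (w₁' ++ [b₁]).length ≤ w₂'.length := by
    have := hpre.length_le
    simp only [List.length_append, List.length_singleton] at this ⊢
    rcases Nat.lt_or_ge (w₁'.length + 1) (w₂'.length + 1) with h | h
    · omega
    · exfalso; apply hne
      exact List.IsPrefix.eq_of_length_le hpre (by simpa using h)
  have hpre' : (w₁' ++ [b₁]) <+: w₂' := by
    rw [List.prefix_iff_eq_take, List.take_append_of_le_length hlen] at hpre
    exact hpre ▸ List.take_prefix _ _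
  have := rl_prefix_le hρ hρ1 hpre'
  linarith

lemma cut_rl_lower (hρ : ∀ b, 0 < ρ b) {d : ℝ} (hd : 0 < d) {w : List Bool}
    (hw : w ∈ cut ρ d) {m : ℝ} (hm0 : 0 < m) (hm : ∀ b, m ≤ ρ b) : m * d < rl ρ w := by
  obtain ⟨w', b, rfl, hle, hgt⟩ := hw
  have h1 := rl_pos hρ w'
  have hmb := hm b
  have hb := hρ b
  rw [rl_append, rl_cons, rl_nil, mul_one]
  nlinarith

lemma cut_finite (hρ : ∀ b, 0 < ρ b) (hρ1 : ∀ b, ρ b < 1) {d : ℝ} (hd : 0 < d) :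
    (cut ρ d).Finite := by
  set m : ℝ := max (ρ false) (ρ true) with hm
  have hm0 : 0 < m := lt_of_lt_of_le (hρ false) (le_max_left _ _)
  have hm1 : m < 1 := max_lt (hρ1 false) (hρ1 true)
  have hmb : ∀ b, ρ b ≤ m := fun b => by cases b <;> simp [hm]
  obtain ⟨N, hN⟩ := exists_pow_lt_of_lt_one hd hm1
  apply Set.Finite.subset (List.finite_length_le Bool (N + 1))
  rintro w ⟨w', b, rfl, hle, hgt⟩
  simp only [Set.mem_setOf_eq, List.length_append, List.length_singleton]
  by_contra hcon
  push_neg at hcon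
  have hlen : N ≤ w'.length := by omega
  have h2 : rl ρ w' ≤ m ^ w'.length := rl_le_pow hρ w' m hmb
  have h3 : m ^ w'.length ≤ m ^ N := pow_le_pow_of_le_one hm0.le hm1.le hlen
  linarith

/-! ### disjointness of images of V -/

section OSC

variable {V : Set ℝ} (hsub : ∀ b, ap ρ cc b '' V ⊆ V)
  (hdisj : ap ρ cc false '' V ∩ ap ρ cc true '' V = ∅)

include hsub in
lemma fw_image_V_subset (w : List Bool) : fw ρ cc w '' V ⊆ V :=
  fw_image_subset hsub w

lemma ap_injective (hρ : ∀ b, 0 < ρ b) (b : Bool) : Function.Injective (ap ρ cc b) := by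
  intro x y h
  simp only [ap] at h
  have := (hρ b).ne'
  field_simp at h
  rcases mul_eq_zero.1 (show ρ b * (x - y) = 0 by linarith) with h | h
  · exact absurd h this
  · linarith

include hsub hdisj in
lemma fw_image_V_disjoint (hρ : ∀ b, 0 < ρ b) :
    ∀ w₁ w₂ : List Bool, ¬ w₁ <+: w₂ → ¬ w₂ <+: w₁ →
      fw ρ cc w₁ '' V ∩ fw ρ cc w₂ '' V = ∅ := by
  intro w₁
  induction w₁ with
  | nil => intro w₂ h1 _; exact absurd List.nil_prefix h1
  | cons a t ih =>
    intro w₂ h1 h2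
    match w₂ with
    | [] => exact absurd List.nil_prefix h2
    | a' :: t' =>
      have heq : ∀ (b : Bool) (s : List Bool),
          fw ρ cc (b :: s) '' V = ap ρ cc b '' (fw ρ cc s '' V) := by
        intro b s; rw [← Set.image_comp]; rfl
      by_cases hab : a = a'
      · subst hab
        have h1' : ¬ t <+: t' := fun h => h1 (List.cons_prefix_cons.2 ⟨rfl, h⟩)
        have h2' : ¬ t' <+: t := fun h => h2 (List.cons_prefix_cons.2 ⟨rfl, h⟩)
        rw [heq a t, heq a t', ← Set.image_inter (ap_injective hρ a), ih t' h1' h2',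
          Set.image_empty]
      · apply Set.eq_empty_of_subset_empty
        have hs1 : fw ρ cc (a :: t) '' V ⊆ ap ρ cc a '' V := by
          rw [heq a t]; exact Set.image_mono (fw_image_subset hsub t)
        have hs2 : fw ρ cc (a' :: t') '' V ⊆ ap ρ cc a' '' V := by
          rw [heq a' t']; exact Set.image_mono (fw_image_subset hsub t')
        refine (Set.inter_subset_inter hs1 hs2).trans ?_
        rcases Bool.eq_false_or_eq_true a with rfl | rfl <;>
          rcases Bool.eq_false_or_eq_true a' with rfl | rfl <;>
            simp_all [Set.inter_comm, hdisj.le]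

end OSC

/-! ### the mass lemma -/

lemma mass_lemma (hρ : ∀ b, 0 < ρ b) {l : ℝ}
    (hl : ρ false ^ l + ρ true ^ l = 1)
    (S : Finset (List Bool)) (N : ℕ)
    (h : ∀ u : List Bool, u.length = N → ∃ w ∈ S, w <+: u) :
    1 ≤ ∑ w ∈ S, rl ρ w ^ l := by
  induction N generalizing S with
  | zero =>
    have hnn : ∀ w ∈ S, 0 ≤ rl ρ w ^ l := fun w _ => Real.rpow_nonneg (rl_pos hρ w).le l
    obtain ⟨w, hwS, hpre⟩ := h [] rfl
    have hw : w = [] := List.prefix_nil.mp hpre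
    subst hw
    calc (1:ℝ) = rl ρ [] ^ l := by simp
    _ ≤ ∑ w ∈ S, rl ρ w ^ l := Finset.single_le_sum hnn hwS
  | succ N ih =>
    have hnn : ∀ w ∈ S, 0 ≤ rl ρ w ^ l := fun w _ => Real.rpow_nonneg (rl_pos hρ w).le l
    by_cases hnil : ([] : List Bool) ∈ S
    · calc (1:ℝ) = rl ρ [] ^ l := by simp
      _ ≤ ∑ w ∈ S, rl ρ w ^ l := Finset.single_le_sum hnn hnil
    · set Sb : Bool → Finset (List Bool) :=
        fun b => (S.filter (fun w => w.head? = some b)).image List.tail with hSb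
      have key : ∀ b, ρ b ^ l ≤ ∑ w ∈ S.filter (fun w => w.head? = some b), rl ρ w ^ l := by
        intro b
        have hb : ∀ u : List Bool, u.length = N → ∃ w ∈ Sb b, w <+: u := by
          intro u hu
          obtain ⟨w, hwS, hpre⟩ := h (b :: u) (by simp [hu])
          cases w with
          | nil => exact absurd hwS hnil
          | cons b' w' =>
            rw [List.cons_prefix_cons] at hpre
            obtain ⟨rfl, hpre⟩ := hpre
            exact ⟨w', Finset.mem_image.2 ⟨b' :: w', Finset.mem_filter.2 ⟨hwS, rfl⟩, rfl⟩, hpre⟩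
        have h1 := ih (Sb b) hb
        have h2 : ∑ w ∈ Sb b, rl ρ w ^ l
            = ∑ w ∈ S.filter (fun w => w.head? = some b), rl ρ w.tail ^ l := by
          rw [hSb]
          apply Finset.sum_image
          intro x hx y hy hxy
          rw [Finset.mem_coe, Finset.mem_filter] at hx hy
          rw [← List.cons_head?_tail hx.2, ← List.cons_head?_tail hy.2, hxy]
        have h3 : ∀ w ∈ S.filter (fun w => w.head? = some b),
            rl ρ w ^ l = ρ b ^ l * rl ρ w.tail ^ l := by
          intro w hw
          rw [Finset.mem_filter] at hw
          conv_lhs => rw [← List.cons_head?_tail hw.2]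
          rw [rl_cons, Real.mul_rpow (hρ b).le (rl_pos hρ _).le]
        calc ρ b ^ l = ρ b ^ l * 1 := (mul_one _).symm
        _ ≤ ρ b ^ l * ∑ w ∈ Sb b, rl ρ w ^ l := by
            apply mul_le_mul_of_nonneg_left h1 (Real.rpow_nonneg (hρ b).le l)
        _ = ∑ w ∈ S.filter (fun w => w.head? = some b), rl ρ w ^ l := by
            rw [h2, Finset.mul_sum]
            exact (Finset.sum_congr rfl h3).symm
      have hdisj2 : Disjoint (S.filter (fun w => w.head? = some false))
          (S.filter (fun w => w.head? = some true)) := by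
        rw [Finset.disjoint_left]
        intro w hw1 hw2
        rw [Finset.mem_filter] at hw1 hw2
        rw [hw1.2] at hw2
        simpa using hw2.2
      calc (1:ℝ) = ρ false ^ l + ρ true ^ l := hl.symm
      _ ≤ _ + _ := add_le_add (key false) (key true)
      _ = ∑ w ∈ (S.filter (fun w => w.head? = some false))
            ∪ (S.filter (fun w => w.head? = some true)), rl ρ w ^ l :=
          (Finset.sum_union hdisj2).symm
      _ ≤ ∑ w ∈ S, rl ρ w ^ l := by
          apply Finset.sum_le_sum_of_subset_of_nonneg
          · exact Finset.union_subset (Finset.filter_subset _ _) (Finset.filter_subset _ _)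
          · intro w hw _; exact hnn w hw

/-! ### K is contained in the closure of V -/

lemma dist_ap (hρ : ∀ b, 0 < ρ b) (b : Bool) (x y : ℝ) :
    dist (ap ρ cc b x) (ap ρ cc b y) = ρ b * dist x y := by
  have := dist_fw (cc := cc) hρ [b] x y
  simpa using this

lemma K_subset_closureV (hρ : ∀ b, 0 < ρ b) (hρ1 : ∀ b, ρ b < 1)
    {K V : Set ℝ} (hKc : IsCompact K) (hKne : K.Nonempty)
    (hcov : K ⊆ ap ρ cc false '' K ∪ ap ρ cc true '' K)
    (hsub : ∀ b, ap ρ cc b '' V ⊆ V) (hVne : V.Nonempty)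
    (hVb : Bornology.IsBounded V) :
    K ⊆ closure V := by
  set C := closure V with hC
  have hCcl : IsClosed C := isClosed_closure
  have hCne : C.Nonempty := hVne.closure
  have hCc : IsCompact C := Metric.isCompact_of_isClosed_isBounded hCcl hVb.closure
  have hCinv : ∀ b, ap ρ cc b '' C ⊆ C := by
    intro b
    have hcont : Continuous (ap ρ cc b) := by
      have h : ap ρ cc b = fun x => ρ b * x + cc b := rfl
      rw [h]; fun_prop
    calc ap ρ cc b '' closure V ⊆ closure (ap ρ cc b '' V) :=
          image_closure_subset_closure_image hcont
    _ ⊆ closure V := closure_mono (hsub b)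
  obtain ⟨x₀, hx₀K, hmax⟩ := hKc.exists_isMaxOn hKne (Metric.continuous_infDist_pt C).continuousOn
  set m := Metric.infDist x₀ C with hm
  have hm0 : 0 ≤ m := Metric.infDist_nonneg
  have hmzero : m = 0 := by
    have hx : ∃ b y, y ∈ K ∧ ap ρ cc b y = x₀ := by
      rcases hcov hx₀K with ⟨y, hy, h⟩ | ⟨y, hy, h⟩
      exacts [⟨false, y, hy, h⟩, ⟨true, y, hy, h⟩]
    obtain ⟨b, y, hyK, hxy⟩ := hx
    obtain ⟨cpt, hcptC, hdist⟩ := hCc.exists_infDist_eq_dist hCne y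
    have key : m ≤ ρ b * m := by
      calc m = Metric.infDist x₀ C := rfl
      _ ≤ dist x₀ (ap ρ cc b cpt) :=
          Metric.infDist_le_dist_of_mem (hCinv b ⟨cpt, hcptC, rfl⟩)
      _ = ρ b * dist y cpt := by rw [← hxy, dist_ap hρ]
      _ = ρ b * Metric.infDist y C := by rw [hdist]
      _ ≤ ρ b * m := by
          have := hmax hyK
          exact mul_le_mul_of_nonneg_left this (hρ b).le
    nlinarith [hρ b, hρ1 b]
  intro x hxK
  have h1 : Metric.infDist x C ≤ 0 := hmzero ▸ hmax hxK
  have h2 : Metric.infDist x C = 0 := le_antisymm h1 Metric.infDist_nonneg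
  exact (hCcl.mem_iff_infDist_zero hCne).2 h2

/-! ### a sub-additivity helper -/

lemma rpow_subadd {a b l : ℝ} (ha : 0 ≤ a) (hb : 0 ≤ b) (hl0 : 0 ≤ l) (hl1 : l ≤ 1) :
    (a + b) ^ l ≤ a ^ l + b ^ l := by
  have h := NNReal.rpow_add_le_add_rpow a.toNNReal b.toNNReal hl0 hl1
  have h2 : ((a.toNNReal + b.toNNReal : ℝ≥0) : ℝ) = a + b := by
    push_cast
    rw [Real.coe_toNNReal a ha, Real.coe_toNNReal b hb]
  calc (a + b) ^ l = (((a.toNNReal + b.toNNReal : ℝ≥0) : ℝ)) ^ l := by rw [h2]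
  _ = (((a.toNNReal + b.toNNReal) ^ l : ℝ≥0) : ℝ) := by rw [NNReal.coe_rpow]
  _ ≤ ((a.toNNReal ^ l + b.toNNReal ^ l : ℝ≥0) : ℝ) := by exact_mod_cast h
  _ = a ^ l + b ^ l := by
      push_cast
      rw [Real.coe_toNNReal a ha, Real.coe_toNNReal b hb]

lemma sum_biUnion_le' {α β : Type*} [DecidableEq α] [DecidableEq β]
    (F : Finset α) (A : α → Finset β) (f : β → ℝ) (hf : ∀ b, 0 ≤ f b) :
    ∑ w ∈ F.biUnion A, f w ≤ ∑ n ∈ F, ∑ w ∈ A n, f w := by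
  induction F using Finset.induction with
  | empty => simp
  | @insert a F ha ih =>
    rw [Finset.biUnion_insert, Finset.sum_insert ha]
    have h1 : ∑ w ∈ A a ∪ F.biUnion A, f w ≤ ∑ w ∈ A a, f w + ∑ w ∈ F.biUnion A, f w := by
      have := Finset.sum_union_inter (s₁ := A a) (s₂ := F.biUnion A) (f := f)
      have hnn : 0 ≤ ∑ w ∈ A a ∩ F.biUnion A, f w :=
        Finset.sum_nonneg fun w _ => hf w
      linarith
    linarith [ih]

/-! ### the counting lemma -/

lemma counting (hρ : ∀ b, 0 < ρ b) (hρ1 : ∀ b, ρ b < 1)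
    {V : Set ℝ} (hsub : ∀ b, ap ρ cc b '' V ⊆ V)
    (hdisjV : ap ρ cc false '' V ∩ ap ρ cc true '' V = ∅)
    {K : Set ℝ} (hKV : K ⊆ closure V)
    {x₀ ε R : ℝ} (hε : 0 < ε) (hεR : ε ≤ R)
    (hball : Metric.ball x₀ ε ⊆ V)
    (hVR : closure V ⊆ Metric.closedBall x₀ R)
    {d : ℝ} (hd : 0 < d) {U : Set ℝ} (hU : ∀ p ∈ U, ∀ q ∈ U, dist p q ≤ d)
    {l : ℝ} (hl0 : 0 < l)
    {mn : ℝ} (hmn0 : 0 < mn) (hmn : ∀ b, mn ≤ ρ b)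
    (T : Finset (List Bool))
    (hT : ∀ w ∈ T, w ∈ cut ρ d ∧ ∃ p, p ∈ fw ρ cc w '' K ∧ p ∈ U) :
    ∑ w ∈ T, rl ρ w ^ l ≤ ((2 * R + 1) / (mn * ε)) * d ^ l := by
  have hR0 : 0 < R := lt_of_lt_of_le hε hεR
  -- first: sum ≤ card * d ^ l
  have hsum : ∑ w ∈ T, rl ρ w ^ l ≤ (T.card : ℝ) * d ^ l := by
    have := Finset.sum_le_card_nsmul T (fun w => rl ρ w ^ l) (d ^ l) ?_
    · simpa [nsmul_eq_mul] using this
    · intro w hw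
      obtain ⟨⟨w', b, rfl, hle, _⟩, _⟩ := hT w hw
      exact Real.rpow_le_rpow (rl_pos hρ _).le hle hl0.le
  -- now card bound via volume
  have hcard : (T.card : ℝ) * (mn * ε) ≤ 2 * R + 1 := by
    rcases T.eq_empty_or_nonempty with rfl | ⟨w₀, hw₀⟩
    · simp; positivity
    obtain ⟨_, p₀, _, hp₀U⟩ := hT w₀ hw₀
    set B : List Bool → Set ℝ := fun w => Metric.ball (fw ρ cc w x₀) (rl ρ w * ε) with hB
    have hBsubV : ∀ w, B w ⊆ fw ρ cc w '' V := by
      intro w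
      intro q hq
      simp only [hB] at hq
      rw [← fw_image_ball (cc := cc) hρ] at hq
      exact Set.image_mono hball hq
    have hdisjB : (T : Set (List Bool)).PairwiseDisjoint B := by
      intro w₁ h₁ w₂ h₂ hne
      have hc1 := (hT w₁ h₁).1
      have hc2 := (hT w₂ h₂).1
      have hd12 := fw_image_V_disjoint hsub hdisjV hρ w₁ w₂
        (cut_not_prefix hρ hρ1 hc1 hc2 hne)
        (cut_not_prefix hρ hρ1 hc2 hc1 (Ne.symm hne))
      refine Set.disjoint_left.2 fun x hx1 hx2 => ?_
      have : x ∈ fw ρ cc w₁ '' V ∩ fw ρ cc w₂ '' V := ⟨hBsubV w₁ hx1, hBsubV w₂ hx2⟩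
      rw [hd12] at this
      exact this
    have hBsubBall : ∀ w ∈ T, B w ⊆ Metric.closedBall p₀ ((2 * R + 1) * d) := by
      intro w hw q hq
      obtain ⟨⟨w', b, hweq, hle, _⟩, p, ⟨k, hkK, rfl⟩, hpU⟩ := hT w hw
      have hrlw : 0 < rl ρ w := rl_pos hρ w
      have hrld : rl ρ w ≤ d := hweq ▸ hle
      rw [Metric.mem_ball] at hq
      have hxk : dist x₀ k ≤ R := by
        have := hVR (hKV hkK)
        rw [Metric.mem_closedBall] at this
        rw [dist_comm]; exact this
      have h1 : dist (fw ρ cc w x₀) (fw ρ cc w k) = rl ρ w * dist x₀ k := dist_fw hρ w x₀ k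
      have h2 : dist (fw ρ cc w k) p₀ ≤ d := hU _ hpU _ hp₀U
      rw [Metric.mem_closedBall]
      calc dist q p₀ ≤ dist q (fw ρ cc w x₀) + dist (fw ρ cc w x₀) (fw ρ cc w k)
          + dist (fw ρ cc w k) p₀ := dist_triangle4 _ _ _ _
      _ ≤ rl ρ w * ε + rl ρ w * R + d := by
          refine add_le_add (add_le_add hq.le ?_) h2
          rw [h1]
          exact mul_le_mul_of_nonneg_left hxk hrlw.le
      _ ≤ d * R + d * R + d := by
          have h3 : rl ρ w * ε ≤ d * R :=
            mul_le_mul hrld hεR hε.le hd.le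
          have h4 : rl ρ w * R ≤ d * R :=
            mul_le_mul_of_nonneg_right hrld hR0.le
          linarith
      _ = (2 * R + 1) * d := by ring
    -- volume counting
    have hmeas : ∀ w ∈ T, MeasurableSet (B w) := fun w _ => Metric.isOpen_ball.measurableSet
    have hvol : volume (⋃ w ∈ T, B w) = ∑ w ∈ T, volume (B w) :=
      measure_biUnion_finset hdisjB hmeas
    have hvol2 : ∑ w ∈ T, volume (B w) ≤ ENNReal.ofReal (2 * ((2 * R + 1) * d)) := by
      rw [← hvol, ← Real.volume_closedBall p₀ ((2 * R + 1) * d)]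
      apply measure_mono
      exact Set.iUnion₂_subset hBsubBall
    have hvol3 : ∀ w ∈ T, ENNReal.ofReal (2 * (mn * d * ε)) ≤ volume (B w) := by
      intro w hw
      rw [hB]
      simp only [Real.volume_ball]
      apply ENNReal.ofReal_le_ofReal
      have := cut_rl_lower hρ hd (hT w hw).1 hmn0 hmn
      nlinarith
    have hvol4 : (T.card : ℕ) • ENNReal.ofReal (2 * (mn * d * ε))
        ≤ ENNReal.ofReal (2 * ((2 * R + 1) * d)) :=
      le_trans (Finset.card_nsmul_le_sum T _ _ hvol3) hvol2
    have hvol5 : ENNReal.ofReal ((T.card : ℝ) * (2 * (mn * d * ε)))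
        ≤ ENNReal.ofReal (2 * ((2 * R + 1) * d)) := by
      rw [ENNReal.ofReal_mul (by positivity)]
      rw [ENNReal.ofReal_natCast] at *
      simpa [nsmul_eq_mul] using hvol4
    rw [ENNReal.ofReal_le_ofReal_iff (by positivity)] at hvol5
    have hT0 : (0:ℝ) ≤ T.card := Nat.cast_nonneg _
    nlinarith
  -- combine
  have hdl : 0 ≤ d ^ l := Real.rpow_nonneg hd.le l
  have hM : (T.card : ℝ) ≤ (2 * R + 1) / (mn * ε) := by
    rw [le_div_iff₀ (by positivity)]
    exact hcard
  calc ∑ w ∈ T, rl ρ w ^ l ≤ (T.card : ℝ) * d ^ l := hsum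
  _ ≤ ((2 * R + 1) / (mn * ε)) * d ^ l := mul_le_mul_of_nonneg_right hM hdl

/-! ### upper bound -/

lemma fw_lipschitz (hρ : ∀ b, 0 < ρ b) (w : List Bool) :
    LipschitzWith (rl ρ w).toNNReal (fw ρ cc w) := by
  apply LipschitzWith.of_dist_le_mul
  intro x y
  rw [dist_fw hρ, Real.coe_toNNReal _ (rl_pos hρ w).le]

lemma ediam_fw_image_le (hρ : ∀ b, 0 < ρ b) (w : List Bool) (K : Set ℝ) :
    EMetric.diam (fw ρ cc w '' K) ≤ ENNReal.ofReal (rl ρ w) * EMetric.diam K := by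
  have h := (fw_lipschitz (cc := cc) hρ w).ediam_image_le K
  exact h

lemma sum_rl_rpow (hρ : ∀ b, 0 < ρ b) {l : ℝ}
    (hl : ρ false ^ l + ρ true ^ l = 1) (n : ℕ) :
    ∑ u : Fin n → Bool, rl ρ (List.ofFn u) ^ l = 1 := by
  have h1 : ∀ u : Fin n → Bool, rl ρ (List.ofFn u) ^ l = ∏ i, ρ (u i) ^ l := by
    intro u
    rw [rl, List.map_ofFn, List.prod_ofFn,
      Real.finset_prod_rpow _ _ (fun i _ => (hρ _).le)]
    rfl
  have h2 : (∏ _i : Fin n, (∑ b : Bool, ρ b ^ l)) = ∑ u ∈ Fintype.piFinset (fun _ : Fin n => (Finset.univ : Finset Bool)), ∏ i, ρ (u i) ^ l :=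
    Finset.prod_univ_sum _ _
  have h3 : ∑ b : Bool, ρ b ^ l = 1 := by
    rw [Fintype.sum_bool]
    linarith
  calc ∑ u : Fin n → Bool, rl ρ (List.ofFn u) ^ l
      = ∑ u : Fin n → Bool, ∏ i, ρ (u i) ^ l := Finset.sum_congr rfl (fun u _ => h1 u)
  _ = ∏ _i : Fin n, (∑ b : Bool, ρ b ^ l) := by rw [h2, Fintype.piFinset_univ]
  _ = 1 := by rw [h3]; simp

lemma upper (hρ : ∀ b, 0 < ρ b) (hρ1 : ∀ b, ρ b < 1) {K : Set ℝ}
    (hKb : Bornology.IsBounded K)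
    (hcov : K ⊆ ap ρ cc false '' K ∪ ap ρ cc true '' K)
    {l : ℝ} (hl0 : 0 ≤ l) (hl : ρ false ^ l + ρ true ^ l = 1) :
    μH[l] K ≤ EMetric.diam K ^ l := by
  set m : ℝ := max (ρ false) (ρ true) with hmdef
  have hm0 : 0 < m := lt_of_lt_of_le (hρ false) (le_max_left _ _)
  have hm1 : m < 1 := max_lt (hρ1 false) (hρ1 true)
  have hmb : ∀ b, ρ b ≤ m := fun b => by cases b <;> simp [hmdef]
  have hdK : EMetric.diam K ≠ ⊤ := hKb.ediam_ne_top
  have hmain := MeasureTheory.Measure.hausdorffMeasure_le_liminf_sum l K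
    (l := Filter.atTop)
    (fun n : ℕ => ENNReal.ofReal (m ^ n) * EMetric.diam K)
    ?_ (fun n (u : Fin n → Bool) => fw ρ cc (List.ofFn u) '' K) ?_ ?_
  · refine hmain.trans ?_
    have hbound : ∀ n : ℕ,
        ∑ u : Fin n → Bool, EMetric.diam (fw ρ cc (List.ofFn u) '' K) ^ l
          ≤ EMetric.diam K ^ l := by
      intro n
      have hterm : ∀ u : Fin n → Bool,
          EMetric.diam (fw ρ cc (List.ofFn u) '' K) ^ l
            ≤ ENNReal.ofReal (rl ρ (List.ofFn u) ^ l) * EMetric.diam K ^ l := by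
        intro u
        calc EMetric.diam (fw ρ cc (List.ofFn u) '' K) ^ l
            ≤ (ENNReal.ofReal (rl ρ (List.ofFn u)) * EMetric.diam K) ^ l :=
              ENNReal.rpow_le_rpow (ediam_fw_image_le hρ _ K) hl0
        _ = ENNReal.ofReal (rl ρ (List.ofFn u)) ^ l * EMetric.diam K ^ l :=
              ENNReal.mul_rpow_of_nonneg _ _ hl0
        _ = ENNReal.ofReal (rl ρ (List.ofFn u) ^ l) * EMetric.diam K ^ l := by
              rw [ENNReal.ofReal_rpow_of_nonneg (rl_pos hρ _).le hl0]
      calc ∑ u : Fin n → Bool, EMetric.diam (fw ρ cc (List.ofFn u) '' K) ^ l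
          ≤ ∑ u : Fin n → Bool, ENNReal.ofReal (rl ρ (List.ofFn u) ^ l)
              * EMetric.diam K ^ l := Finset.sum_le_sum (fun u _ => hterm u)
      _ = (∑ u : Fin n → Bool, ENNReal.ofReal (rl ρ (List.ofFn u) ^ l))
              * EMetric.diam K ^ l := by rw [Finset.sum_mul]
      _ = ENNReal.ofReal (∑ u : Fin n → Bool, rl ρ (List.ofFn u) ^ l)
              * EMetric.diam K ^ l := by
            rw [ENNReal.ofReal_sum_of_nonneg
              (fun u _ => Real.rpow_nonneg (rl_pos hρ _).le l)]
      _ = EMetric.diam K ^ l := by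
            rw [sum_rl_rpow hρ hl n]
            simp
    exact Filter.liminf_le_of_frequently_le'
      (Filter.Eventually.frequently (Filter.Eventually.of_forall hbound))
  · have h1 : Filter.Tendsto (fun n : ℕ => ENNReal.ofReal (m ^ n)) Filter.atTop (nhds 0) := by
      have := ENNReal.tendsto_ofReal
        (tendsto_pow_atTop_nhds_zero_of_lt_one hm0.le hm1)
      simpa using this
    have := ENNReal.Tendsto.mul_const h1 (Or.inr hdK)
    simpa using this
  · apply Filter.Eventually.of_forall
    intro n u
    calc EMetric.diam (fw ρ cc (List.ofFn u) '' K)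
        ≤ ENNReal.ofReal (rl ρ (List.ofFn u)) * EMetric.diam K :=
          ediam_fw_image_le hρ _ K
    _ ≤ ENNReal.ofReal (m ^ n) * EMetric.diam K := by
          apply mul_le_mul_left
          apply ENNReal.ofReal_le_ofReal
          have := rl_le_pow hρ (List.ofFn u) m hmb
          rwa [List.length_ofFn] at this
  · exact Filter.Eventually.of_forall (fun n => K_subset_cover hcov n)

/-! ### lower bound -/

lemma lower (hρ : ∀ b, 0 < ρ b) (hρ1 : ∀ b, ρ b < 1)
    {K V : Set ℝ} (hKc : IsCompact K) (hKne : K.Nonempty)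
    (hcov : K ⊆ ap ρ cc false '' K ∪ ap ρ cc true '' K)
    (hinv : ∀ b, ap ρ cc b '' K ⊆ K)
    (hV : IsOpen V) (hVne : V.Nonempty) (hVb : Bornology.IsBounded V)
    (hsub : ∀ b, ap ρ cc b '' V ⊆ V)
    (hdisjV : ap ρ cc false '' V ∩ ap ρ cc true '' V = ∅)
    {l : ℝ} (hl0 : 0 < l) (hl1 : l ≤ 1)
    (hl : ρ false ^ l + ρ true ^ l = 1) :
    0 < μH[l] K := by
  classical
  have hKV : K ⊆ closure V := K_subset_closureV hρ hρ1 hKc hKne hcov hsub hVne hVb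
  obtain ⟨x₀, hx₀V⟩ := hVne
  obtain ⟨ε, hε0, hball⟩ := Metric.isOpen_iff.1 hV x₀ hx₀V
  obtain ⟨R₀, hR₀⟩ := hVb.subset_closedBall x₀
  set R := max R₀ ε with hRdef
  have hεR : ε ≤ R := le_max_right _ _
  have hR0 : 0 < R := lt_of_lt_of_le hε0 hεR
  have hVR : closure V ⊆ Metric.closedBall x₀ R :=
    closure_minimal
      (hR₀.trans (Metric.closedBall_subset_closedBall (le_max_left _ _)))
      Metric.isClosed_closedBall
  set mn : ℝ := min (ρ false) (ρ true) with hmndef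
  have hmn0 : 0 < mn := lt_min (hρ false) (hρ true)
  have hmn : ∀ b, mn ≤ ρ b := fun b => by cases b <;> simp [hmndef]
  set mx : ℝ := max (ρ false) (ρ true) with hmxdef
  have hmx0 : 0 < mx := lt_of_lt_of_le (hρ false) (le_max_left _ _)
  have hmx1 : mx < 1 := max_lt (hρ1 false) (hρ1 true)
  have hmxb : ∀ b, ρ b ≤ mx := fun b => by cases b <;> simp [hmxdef]
  set M : ℝ := (2 * R + 1) / (mn * ε) with hMdef
  have hM0 : 0 < M := by positivity
  set q : ℝ := (1/2 : ℝ) ^ l with hqdef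
  have hq0 : 0 ≤ q := Real.rpow_nonneg (by norm_num) l
  have hq1 : q < 1 := Real.rpow_lt_one (by norm_num) (by norm_num) hl0
  set C : ℝ := (1 - q)⁻¹ with hCdef
  have hC0 : 0 < C := by
    rw [hCdef]; rw [inv_pos]; linarith
  set ε' : ℝ := min (1/16 : ℝ) (((1 / (2 * M * C)) ^ (1/l : ℝ)) / 3) with hε'def
  have hε'0 : 0 < ε' := by
    apply lt_min (by norm_num)
    have : (0:ℝ) < 1 / (2 * M * C) := by positivity
    positivity
  have hε'16 : ε' ≤ 1/16 := min_le_left _ _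
  have hkey : M * ((3 * ε') ^ l * C) ≤ 1/2 := by
    have h3ε : 3 * ε' ≤ (1 / (2 * M * C)) ^ (1/l : ℝ) := by
      have := min_le_right (1/16 : ℝ) (((1 / (2 * M * C)) ^ (1/l : ℝ)) / 3)
      have h := this.trans_eq rfl
      linarith [hε'def ▸ this]
    have hx0 : (0:ℝ) < 1 / (2 * M * C) := by positivity
    have h2 : (3 * ε') ^ l ≤ ((1 / (2 * M * C)) ^ (1/l : ℝ)) ^ l :=
      Real.rpow_le_rpow (by positivity) h3ε hl0.le
    have h3 : ((1 / (2 * M * C)) ^ (1/l : ℝ)) ^ l = 1 / (2 * M * C) := by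
      rw [← Real.rpow_mul hx0.le]
      rw [show (1/l) * l = 1 by field_simp]
      exact Real.rpow_one _
    rw [h3] at h2
    have hMC : 0 < M * C := by positivity
    calc M * ((3 * ε') ^ l * C) ≤ M * ((1 / (2 * M * C)) * C) := by
          apply mul_le_mul_of_nonneg_left _ hM0.le
          exact mul_le_mul_of_nonneg_right h2 hC0.le
    _ = 1/2 := by field_simp
  -- the main estimate
  have hmHM : ENNReal.ofReal (1/(2*M)) ≤ μH[l] K := by
    rw [MeasureTheory.Measure.hausdorffMeasure_apply]
    apply le_iSup_of_le (ENNReal.ofReal (1/4))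
    have hr4 : (0:ℝ≥0∞) < ENNReal.ofReal (1/4) := ENNReal.ofReal_pos.2 (by norm_num)
    apply le_iSup_of_le hr4
    refine le_iInf fun t => le_iInf fun htcov => le_iInf fun htdiam => ?_
    set δ : ℕ → ℝ := fun n => ε' * (1/2)^n with hδdef
    have hδ0 : ∀ n, 0 < δ n := fun n => by positivity
    have hδε' : ∀ n, δ n ≤ ε' := fun n => by
      rw [hδdef]
      calc ε' * (1/2:ℝ)^n ≤ ε' * 1 := by
            apply mul_le_mul_of_nonneg_left _ hε'0.le
            exact pow_le_one₀ (by norm_num) (by norm_num)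
      _ = ε' := mul_one _
    set U : ℕ → Set ℝ := fun n => Metric.thickening (δ n) (t n) with hUdef
    have hUopen : ∀ n, IsOpen (U n) := fun n => Metric.isOpen_thickening
    have hUcover : K ⊆ ⋃ n, U n :=
      htcov.trans (Set.iUnion_mono fun n => Metric.self_subset_thickening (hδ0 n) _)
    obtain ⟨F, hF⟩ := hKc.elim_finite_subcover U hUopen hUcover
    set F' := F.filter (fun n => (U n).Nonempty) with hF'def
    have hF'cover : ∀ x ∈ K, ∃ n ∈ F', x ∈ U n := by
      intro x hx
      obtain ⟨n, hnF, hxU⟩ := Set.mem_iUnion₂.1 (hF hx)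
      exact ⟨n, Finset.mem_filter.2 ⟨hnF, ⟨x, hxU⟩⟩, hxU⟩
    have htdiam' : ∀ n, EMetric.diam (t n) ≠ ⊤ :=
      fun n => ((htdiam n).trans_lt ENNReal.ofReal_lt_top).ne
    have hdiamU : ∀ n, EMetric.diam (U n) ≤ EMetric.diam (t n) + 2 * ENNReal.ofReal (δ n) := by
      intro n
      have h := Metric.ediam_thickening_le (s := t n) (δ n).toNNReal
      rw [Real.coe_toNNReal _ (hδ0 n).le] at h
      simp only [hUdef]
      exact h
    have hdiamUne : ∀ n, EMetric.diam (U n) ≠ ⊤ := by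
      intro n
      apply ne_top_of_le_ne_top _ (hdiamU n)
      exact ENNReal.add_ne_top.2 ⟨htdiam' n, ENNReal.mul_ne_top (by simp) ENNReal.ofReal_ne_top⟩
    set a : ℕ → ℝ := fun n => (EMetric.diam (t n)).toReal with hadef
    have ha0 : ∀ n, 0 ≤ a n := fun n => ENNReal.toReal_nonneg
    have ha14 : ∀ n, a n ≤ 1/4 := by
      intro n
      rw [hadef]
      exact ENNReal.toReal_le_of_le_ofReal (by norm_num) (htdiam n)
    have hdiamUR : ∀ n, (EMetric.diam (U n)).toReal ≤ a n + 2 * δ n := by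
      intro n
      have h1 := ENNReal.toReal_mono
        (ENNReal.add_ne_top.2 ⟨htdiam' n, ENNReal.mul_ne_top (by simp) ENNReal.ofReal_ne_top⟩)
        (hdiamU n)
      rw [ENNReal.toReal_add (htdiam' n)
        (ENNReal.mul_ne_top (by simp) ENNReal.ofReal_ne_top)] at h1
      rw [ENNReal.toReal_mul, ENNReal.toReal_ofReal (hδ0 n).le] at h1
      simpa using h1
    set D : ℕ → ℝ := fun n => max ((EMetric.diam (U n)).toReal) (δ n) with hDdef
    have hD0 : ∀ n, 0 < D n := fun n => lt_of_lt_of_le (hδ0 n) (le_max_right _ _)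
    have hDd : ∀ n, D n ≤ a n + 3 * δ n := by
      intro n
      apply max_le
      · linarith [hdiamUR n, hδ0 n]
      · linarith [ha0 n, hδ0 n]
    have hD1 : ∀ n, D n < 1 := by
      intro n
      have := hDd n
      have := ha14 n
      have := hδε' n
      have := hε'16
      linarith
    have hDdist : ∀ n, ∀ p ∈ U n, ∀ r ∈ U n, dist p r ≤ D n := by
      intro n p hp r hr
      have hb : Bornology.IsBounded (U n) := Metric.isBounded_iff_ediam_ne_top.2 (hdiamUne n)
      exact (Metric.dist_le_diam_of_mem hb hp hr).trans (le_max_left _ _)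
    -- the A sets
    have hAfin : ∀ n, {w | w ∈ cut ρ (D n) ∧ (fw ρ cc w '' K ∩ U n).Nonempty}.Finite :=
      fun n => (cut_finite hρ hρ1 (hD0 n)).subset (fun w hw => hw.1)
    set A : ℕ → Finset (List Bool) := fun n => (hAfin n).toFinset with hAdef
    set S := F'.biUnion A with hSdef
    -- F' is nonempty
    rcases F'.eq_empty_or_nonempty with hFe | hFne
    · exfalso
      obtain ⟨x, hx⟩ := hKne
      obtain ⟨n, hn, _⟩ := hF'cover x hx
      rw [hFe] at hn
      exact absurd hn (Finset.notMem_empty n)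
    set η : ℝ := F'.inf' hFne D with hηdef
    have hη0 : 0 < η := by
      rw [hηdef, Finset.lt_inf'_iff]
      exact fun n _ => hD0 n
    obtain ⟨N, hN⟩ := exists_pow_lt_of_lt_one hη0 hmx1
    have hmass_hyp : ∀ u : List Bool, u.length = N → ∃ w ∈ S, w <+: u := by
      intro u hu
      obtain ⟨k₀, hk₀⟩ := hKne
      have hxK : fw ρ cc u k₀ ∈ K := fw_image_subset hinv u ⟨k₀, hk₀, rfl⟩
      obtain ⟨n, hnF', hxU⟩ := hF'cover _ hxK
      have hdn : rl ρ u ≤ D n := by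
        have h1 := rl_le_pow hρ u mx hmxb
        rw [hu] at h1
        have h2 : η ≤ D n := Finset.inf'_le _ hnF'
        linarith
      obtain ⟨w, hwcut, hwpre⟩ := cut_exists_prefix hρ (hD1 n) u hdn
      refine ⟨w, Finset.mem_biUnion.2 ⟨n, hnF', ?_⟩, hwpre⟩
      rw [hAdef, Set.Finite.mem_toFinset]
      refine ⟨hwcut, ⟨fw ρ cc u k₀, ?_, hxU⟩⟩
      obtain ⟨v, rfl⟩ := hwpre
      rw [fw_append]
      exact ⟨fw ρ cc v k₀, fw_image_subset hinv v ⟨k₀, hk₀, rfl⟩, rfl⟩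
    have hmass := mass_lemma hρ hl S N hmass_hyp
    have hcount : ∀ n ∈ F', ∑ w ∈ A n, rl ρ w ^ l ≤ M * D n ^ l := by
      intro n hn
      rw [hMdef]
      apply counting hρ hρ1 hsub hdisjV hKV hε0 hεR hball hVR (hD0 n) (hDdist n) hl0 hmn0 hmn
      intro w hw
      rw [hAdef, Set.Finite.mem_toFinset] at hw
      obtain ⟨hw1, p, hp1, hp2⟩ := hw
      exact ⟨hw1, p, hp1, hp2⟩
    have h1 : (1:ℝ) ≤ ∑ n ∈ F', M * D n ^ l := by
      calc (1:ℝ) ≤ ∑ w ∈ S, rl ρ w ^ l := hmass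
      _ ≤ ∑ n ∈ F', ∑ w ∈ A n, rl ρ w ^ l :=
          sum_biUnion_le' F' A _ (fun w => Real.rpow_nonneg (rl_pos hρ w).le l)
      _ ≤ ∑ n ∈ F', M * D n ^ l := Finset.sum_le_sum hcount
    have hDl : ∀ n, D n ^ l ≤ a n ^ l + (3*ε')^l * q^n := by
      intro n
      have h2 : D n ^ l ≤ (a n + 3 * δ n) ^ l :=
        Real.rpow_le_rpow (hD0 n).le (hDd n) hl0.le
      have h3 : (a n + 3*δ n)^l ≤ a n ^ l + (3*δ n)^l :=
        rpow_subadd (ha0 n) (by positivity) hl0.le hl1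
      have h4 : (3*δ n)^l = (3*ε')^l * q^n := by
        rw [hδdef]
        rw [show 3*(ε'*(1/2:ℝ)^n) = (3*ε')*((1/2:ℝ)^n) by ring]
        rw [Real.mul_rpow (by positivity) (by positivity)]
        congr 1
        rw [hqdef, ← Real.rpow_natCast ((1/2:ℝ)) n, ← Real.rpow_mul (by norm_num),
          mul_comm, Real.rpow_mul (by norm_num), Real.rpow_natCast]
      linarith
    have hgeom : ∑ n ∈ F', q^n ≤ C := by
      have h5 := Summable.sum_le_tsum (F' : Finset ℕ) (fun i _ => pow_nonneg hq0 i)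
        (summable_geometric_of_lt_one hq0 hq1)
      rwa [tsum_geometric_of_lt_one hq0 hq1] at h5
    have h6 : ∑ n ∈ F', M * D n ^ l
        ≤ M * (∑ n ∈ F', a n ^ l) + M * ((3*ε')^l * C) := by
      calc ∑ n ∈ F', M * D n ^ l
          ≤ ∑ n ∈ F', (M * a n ^ l + M * ((3*ε')^l * q^n)) := by
            apply Finset.sum_le_sum
            intro n _
            have := hDl n
            nlinarith [hM0]
      _ = M * (∑ n ∈ F', a n ^ l) + M * (3*ε')^l * (∑ n ∈ F', q^n) := by
            rw [Finset.sum_add_distrib, Finset.mul_sum, Finset.mul_sum]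
            congr 1
            apply Finset.sum_congr rfl
            intro n _
            ring
      _ ≤ M * (∑ n ∈ F', a n ^ l) + M * ((3*ε')^l * C) := by
            have h7 : M * (3*ε')^l * (∑ n ∈ F', q^n) ≤ M * (3*ε')^l * C := by
              apply mul_le_mul_of_nonneg_left hgeom
              positivity
            linarith [h7]
    have h8 : 1/(2*M) ≤ ∑ n ∈ F', a n ^ l := by
      have h9 : (1:ℝ)/2 ≤ M * (∑ n ∈ F', a n ^ l) := by linarith
      rw [div_le_iff₀ (by positivity)]
      calc (1:ℝ) ≤ 2 * (M * (∑ n ∈ F', a n ^ l)) := by linarith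
      _ = (∑ n ∈ F', a n ^ l) * (2 * M) := by ring
    -- to ENNReal
    calc ENNReal.ofReal (1/(2*M)) ≤ ENNReal.ofReal (∑ n ∈ F', a n ^ l) :=
          ENNReal.ofReal_le_ofReal h8
    _ = ∑ n ∈ F', ENNReal.ofReal (a n ^ l) :=
          ENNReal.ofReal_sum_of_nonneg (fun n _ => Real.rpow_nonneg (ha0 n) l)
    _ ≤ ∑ n ∈ F', ⨆ (_ : (t n).Nonempty), EMetric.diam (t n) ^ l := by
          apply Finset.sum_le_sum
          intro n hn
          have hUne : (U n).Nonempty := (Finset.mem_filter.1 hn).2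
          have htne : (t n).Nonempty := by
            by_contra h
            rw [Set.not_nonempty_iff_eq_empty] at h
            simp only [hUdef] at hUne
            rw [h, Metric.thickening_empty] at hUne
            exact Set.not_nonempty_empty hUne
          rw [iSup_pos htne]
          rw [← ENNReal.ofReal_rpow_of_nonneg (ha0 n) hl0.le]
          apply ENNReal.rpow_le_rpow _ hl0.le
          rw [hadef]
          rw [ENNReal.ofReal_toReal (htdiam' n)]
    _ ≤ ∑' n, ⨆ (_ : (t n).Nonempty), EMetric.diam (t n) ^ l := ENNReal.sum_le_tsum F'
  calc (0:ℝ≥0∞) < ENNReal.ofReal (1/(2*M)) := ENNReal.ofReal_pos.2 (by positivity)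
  _ ≤ μH[l] K := hmHM

end Stmt15

theorem stmt15 (r0 r1 c0 c1 : ℝ) (h0 : r0 ∈ Set.Ioo (0 : ℝ) 1)
    (h1 : r1 ∈ Set.Ioo (0 : ℝ) 1) (K : Set ℝ) (hKne : K.Nonempty)
    (hKc : IsCompact K)
    (hK : K = (fun x => r0 * x + c0) '' K ∪ (fun x => r1 * x + c1) '' K)
    (V : Set ℝ) (hV : IsOpen V) (hVne : V.Nonempty) (hVb : Bornology.IsBounded V)
    (hsub : (fun x => r0 * x + c0) '' V ∪ (fun x => r1 * x + c1) '' V ⊆ V)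
    (hdisj : (fun x => r0 * x + c0) '' V ∩ (fun x => r1 * x + c1) '' V = ∅) :
    ∃ lam : ℝ, 0 < lam ∧ r0 ^ lam + r1 ^ lam = 1 ∧
      dimH K = ENNReal.ofReal lam := by
  classical
  open Stmt15 in
  -- volume of V
  have hVmeas : MeasurableSet V := hV.measurableSet
  have hvolV_pos : 0 < volume V := by
    obtain ⟨x₀, hx₀⟩ := hVne
    obtain ⟨ε, hε0, hball⟩ := Metric.isOpen_iff.1 hV x₀ hx₀
    calc (0:ℝ≥0∞) < volume (Metric.ball x₀ ε) := by
          rw [Real.volume_ball]; exact ENNReal.ofReal_pos.2 (by linarith)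
    _ ≤ volume V := measure_mono hball
  have hvolV_ne_top : volume V ≠ ⊤ := by
    obtain ⟨R, hR⟩ := hVb.subset_closedBall 0
    exact (lt_of_le_of_lt (measure_mono hR)
      (by rw [Real.volume_closedBall]; exact ENNReal.ofReal_lt_top)).ne
  -- image as a preimage
  have himgpre : ∀ (a c : ℝ), 0 < a →
      (fun x => a * x + c) '' V = (fun y => a⁻¹ * (y - c)) ⁻¹' V := by
    intro a c ha
    ext y
    simp only [Set.mem_image, Set.mem_preimage]
    constructor
    · rintro ⟨x, hx, rfl⟩
      have : a⁻¹ * (a * x + c - c) = x := by field_simp; ring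
      rwa [this]
    · intro h
      refine ⟨a⁻¹ * (y - c), h, ?_⟩
      field_simp
      ring
  have himg : ∀ (a c : ℝ), 0 < a →
      volume ((fun x => a * x + c) '' V) = ENNReal.ofReal a * volume V := by
    intro a c ha
    rw [himgpre a c ha]
    have hsplit : (fun y : ℝ => a⁻¹ * (y - c)) ⁻¹' V
        = (fun y : ℝ => y + (-c)) ⁻¹' ((fun z : ℝ => a⁻¹ * z) ⁻¹' V) := by
      ext y
      simp only [Set.mem_preimage]
      rw [show y + (-c) = y - c by ring]
    rw [hsplit, measure_preimage_add_right]
    have hmap := Real.map_volume_mul_left (a := a⁻¹) (inv_ne_zero ha.ne')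
    rw [← MeasureTheory.Measure.map_apply (measurable_const_mul a⁻¹) hVmeas, hmap]
    rw [MeasureTheory.Measure.smul_apply, smul_eq_mul, inv_inv, abs_of_pos ha]
  -- r0 + r1 ≤ 1
  have hr01 : r0 + r1 ≤ 1 := by
    have hd : Disjoint ((fun x => r0*x+c0) '' V) ((fun x => r1*x+c1) '' V) :=
      Set.disjoint_iff_inter_eq_empty.2 hdisj
    have hmeas1 : MeasurableSet ((fun x => r1*x+c1) '' V) := by
      rw [himgpre r1 c1 h1.1]
      exact hVmeas.preimage (by fun_prop)
    have hu := measure_union (μ := volume) hd hmeas1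
    have h2 : volume ((fun x => r0*x+c0) '' V ∪ (fun x => r1*x+c1) '' V) ≤ volume V :=
      measure_mono hsub
    rw [hu, himg r0 c0 h0.1, himg r1 c1 h1.1, ← add_mul,
      ← ENNReal.ofReal_add h0.1.le h1.1.le] at h2
    have h3 : ENNReal.ofReal (r0 + r1) ≤ 1 := by
      rw [← ENNReal.mul_le_mul_iff_left hvolV_pos.ne' hvolV_ne_top]
      rw [one_mul]
      exact h2
    exact ENNReal.ofReal_le_one.1 h3
  -- IVT
  have hcont : ContinuousOn (fun x : ℝ => r0 ^ x + r1 ^ x) (Set.Icc 0 1) := by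
    apply Continuous.continuousOn
    have e0 : (fun x : ℝ => r0 ^ x) = fun x => Real.exp (Real.log r0 * x) :=
      funext fun x => Real.rpow_def_of_pos h0.1 x
    have e1 : (fun x : ℝ => r1 ^ x) = fun x => Real.exp (Real.log r1 * x) :=
      funext fun x => Real.rpow_def_of_pos h1.1 x
    have c0' : Continuous fun x : ℝ => r0 ^ x := by
      rw [e0]; exact Real.continuous_exp.comp (continuous_const.mul continuous_id)
    have c1' : Continuous fun x : ℝ => r1 ^ x := by
      rw [e1]; exact Real.continuous_exp.comp (continuous_const.mul continuous_id)
    exact c0'.add c1'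
  have hIcc : (1:ℝ) ∈ Set.Icc ((fun x : ℝ => r0 ^ x + r1 ^ x) 1)
      ((fun x : ℝ => r0 ^ x + r1 ^ x) 0) := by
    simp only [Real.rpow_one, Real.rpow_zero]
    constructor <;> [linarith; norm_num]
  obtain ⟨lam, hlamIcc, hlamEq⟩ := intermediate_value_Icc' zero_le_one hcont hIcc
  have hlam0 : 0 < lam := by
    rcases hlamIcc.1.lt_or_eq with h | h
    · exact h
    · exfalso
      rw [← h] at hlamEq
      simp only [Real.rpow_zero] at hlamEq
      norm_num at hlamEq
  have hlam1 : lam ≤ 1 := hlamIcc.2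
  refine ⟨lam, hlam0, hlamEq, ?_⟩
  -- set up the IFS
  set ρ : Bool → ℝ := fun b => bif b then r1 else r0 with hρdef
  set cc : Bool → ℝ := fun b => bif b then c1 else c0 with hccdef
  have hρ : ∀ b, 0 < ρ b := fun b => by cases b <;> simp [hρdef, h0.1, h1.1]
  have hρ1 : ∀ b, ρ b < 1 := fun b => by cases b <;> simp [hρdef, h0.2, h1.2]
  have heq0 : (fun x => r0 * x + c0) = Stmt15.ap ρ cc false := rfl
  have heq1 : (fun x => r1 * x + c1) = Stmt15.ap ρ cc true := rfl
  have hKeq : Stmt15.ap ρ cc false '' K ∪ Stmt15.ap ρ cc true '' K = K := by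
    rw [← heq0, ← heq1]; exact hK.symm
  have hcov : K ⊆ Stmt15.ap ρ cc false '' K ∪ Stmt15.ap ρ cc true '' K := hKeq.ge
  have hinv : ∀ b, Stmt15.ap ρ cc b '' K ⊆ K := by
    intro b
    cases b
    · intro x hx; rw [← hKeq]; exact Or.inl hx
    · intro x hx; rw [← hKeq]; exact Or.inr hx
  have hsubb : ∀ b, Stmt15.ap ρ cc b '' V ⊆ V := by
    intro b
    cases b
    · exact (Set.union_subset_iff.1 hsub).1
    · exact (Set.union_subset_iff.1 hsub).2
  have hdisjV : Stmt15.ap ρ cc false '' V ∩ Stmt15.ap ρ cc true '' V = ∅ := hdisj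
  have hlamEq' : ρ false ^ lam + ρ true ^ lam = 1 := hlamEq
  -- bounds
  have hup := Stmt15.upper hρ hρ1 hKc.isBounded hcov hlam0.le hlamEq'
  have hlow := Stmt15.lower hρ hρ1 hKc hKne hcov hinv hV hVne hVb hsubb hdisjV
    hlam0 hlam1 hlamEq'
  have hcoe : ((lam.toNNReal : ℝ≥0) : ℝ) = lam := Real.coe_toNNReal _ hlam0.le
  have hub : dimH K ≤ (lam.toNNReal : ℝ≥0∞) := by
    apply dimH_le_of_hausdorffMeasure_ne_top
    rw [hcoe]
    exact ne_top_of_le_ne_top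
      (ENNReal.rpow_ne_top_of_nonneg hlam0.le hKc.isBounded.ediam_ne_top) hup
  have hlb : ((lam.toNNReal : ℝ≥0) : ℝ≥0∞) ≤ dimH K := by
    apply le_dimH_of_hausdorffMeasure_ne_zero
    rw [hcoe]
    exact hlow.ne'
  rw [le_antisymm hub hlb]
  rfl
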